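/- In a block graph, between any two vertices there is a unique geodesic (shortest path). -/

import Mathlib

/-- Set of vertices distinguishing `u` and `v`. -/
noncomputable def distinguishers {V : Type*} (G : SimpleGraph V) (u v : V) : Set V :=
  {w | G.dist u w ≠ G.dist v w}

/-- `Dim(G)`: the largest `k` such that every pair of distinct vertices is
distinguished by at least `k` vertices. -/
noncomputable def metricDim {V : Type*} (G : SimpleGraph V) : ℕ :=
  sSup {k | ∀ u v : V, u ≠ v → k ≤ (distinguishers G u v).ncard}

/-- The boundary `∂N(v,m)`: vertices at distance `m` from `v` having a
neighbor outside `N(v,m)`. -/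
def bdry {V : Type*} (G : SimpleGraph V) (v : V) (m : ℕ) : Set V :=
  {w | G.dist v w = m ∧ ∃ x, G.Adj w x ∧ m < G.dist v x}

/-- `v` and `v'` are distinct and have equal (nonempty) `m`-boundary. -/
def eqBdry {V : Type*} (G : SimpleGraph V) (v v' : V) (m : ℕ) : Prop :=
  v ≠ v' ∧ bdry G v m = bdry G v' m ∧ (bdry G v m).Nonempty

noncomputable def etaM {V : Type*} (G : SimpleGraph V) (v v' : V) (m : ℕ) : ℕ :=
  {w | (G.dist v w ≤ m ∨ G.dist v' w ≤ m) ∧ G.dist v w ≠ G.dist v' w}.ncard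

noncomputable def etaG {V : Type*} (G : SimpleGraph V) : ℕ :=
  sInf {n | ∃ (m : ℕ) (v v' : V), eqBdry G v v' m ∧ n = etaM G v v' m}

/-- the diameter of `G`. -/
noncomputable def gdiam {V : Type*} (G : SimpleGraph V) : ℕ :=
  sSup {n | ∃ u v : V, G.dist u v = n}

/-- Reachability in `G` avoiding the vertex set `S`. -/
def ReachOff {V : Type*} (G : SimpleGraph V) (S : Set V) (a b : V) : Prop :=
  ∃ p : G.Walk a b, ∀ x ∈ p.support, x ∉ S

/-- `S` is a common separating subset of the `m`-spheres of `v` and `v'`. -/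
def CommonSepSubset {V : Type*} (G : SimpleGraph V) (v v' : V) (m : ℕ) (S : Set V) : Prop :=
  S ⊆ {w | G.dist v w = m} ∩ {w | G.dist v' w = m} ∧
  (∃ a b : V, a ∉ S ∧ b ∉ S ∧ ¬ ReachOff G S a b) ∧
  (∃ w : V, w ∉ S ∧ ¬ ReachOff G S w v ∧ ¬ ReachOff G S w v')

/-- `(v,v') ∈ 𝒫ₘ(G)`. -/
def memPm {V : Type*} (G : SimpleGraph V) (v v' : V) (m : ℕ) : Prop :=
  v ≠ v' ∧ ∃ S : Set V, CommonSepSubset G v v' m S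

/-- `Sₘ(v,v')`: the union of all common separating subsets of the `m`-spheres. -/
def SmUnion {V : Type*} (G : SimpleGraph V) (v v' : V) (m : ℕ) : Set V :=
  {x | ∃ S : Set V, CommonSepSubset G v v' m S ∧ x ∈ S}

/-- The union of the components of `G \ Sₘ(v,v')` containing neither `v` nor `v'`. -/
def avoidComps {V : Type*} (G : SimpleGraph V) (v v' : V) (m : ℕ) : Set V :=
  {w | w ∉ SmUnion G v v' m ∧ ¬ ReachOff G (SmUnion G v v' m) w v ∧
    ¬ ReachOff G (SmUnion G v v' m) w v'}

noncomputable def muM {V : Type*} (G : SimpleGraph V) (v v' : V) (m : ℕ) : ℕ :=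
  {w | w ∉ avoidComps G v v' m ∧ G.dist v w ≠ G.dist v' w}.ncard

noncomputable def muG {V : Type*} (G : SimpleGraph V) : ℕ :=
  sInf {n | ∃ (m : ℕ) (v v' : V), memPm G v v' m ∧ n = muM G v v' m}

/-- degree as the cardinality of the neighbor set. -/
noncomputable def ndeg {V : Type*} (G : SimpleGraph V) (v : V) : ℕ := (G.neighborSet v).ncard

def IsMajor {V : Type*} (G : SimpleGraph V) (v : V) : Prop := 3 ≤ ndeg G v

/-- `u` is a terminal vertex of the major vertex `w`. -/
def IsTerminalOf {V : Type*} (G : SimpleGraph V) (u w : V) : Prop :=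
  ndeg G u = 1 ∧ IsMajor G w ∧
    ∀ w', IsMajor G w' → w' ≠ w → G.dist u w < G.dist u w'

/-- `G` is a V-graph. -/
def IsVGraph {V : Type*} (G : SimpleGraph V) : Prop :=
  ∃ w, IsMajor G w ∧ {u | IsTerminalOf G u w}.ncard = 2 ∧
    ∀ u, IsTerminalOf G u w → G.Adj u w

/-- `G` is a block graph: connected and every biconnected (2-connected)
set of vertices induces a clique. -/
def IsBlockGraph {V : Type*} (G : SimpleGraph V) : Prop :=
  G.Connected ∧ ∀ B : Set V, 3 ≤ B.ncard → (G.induce B).Connected →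
    (∀ x ∈ B, (G.induce (B \ {x})).Connected) → G.IsClique B

/-- `G` is tagged. -/
def Tagged {V : Type*} (G : SimpleGraph V) : Prop :=
  ∃ K : Set V, G.IsClique K ∧ (∀ K' : Set V, K ⊆ K' → G.IsClique K' → K' = K) ∧
    3 ≤ K.ncard ∧ ∃ u ∈ K, ∃ v ∈ K, u ≠ v ∧
      ndeg G u = K.ncard - 1 ∧ ndeg G v = K.ncard - 1

/-- `G` is neither a complete graph nor a path graph. -/
def NonElementary {V : Type*} (G : SimpleGraph V) : Prop :=
  G ≠ ⊤ ∧ ∀ n : ℕ, IsEmpty (G ≃g SimpleGraph.pathGraph n)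


namespace BlockGraphAux

open SimpleGraph Walk

variable {V : Type*} {G : SimpleGraph V}



lemma reach_induce {S : Set V} : ∀ {a b : V} (w : G.Walk a b)
    (_ : ∀ x ∈ w.support, x ∈ S) (ha : a ∈ S) (hb : b ∈ S),
    (G.induce S).Reachable ⟨a, ha⟩ ⟨b, hb⟩
  | _, _, Walk.nil, _, _, _ => Reachable.refl _
  | a, b, Walk.cons h w, hw, ha, hb => by
    have hc : ∀ x ∈ w.support, x ∈ S := fun x hx => hw x (by simp [hx])
    have hadj : (G.induce S).Adj ⟨a, ha⟩ ⟨_, hc _ w.start_mem_support⟩ := by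
      simpa using h
    exact hadj.reachable.trans (reach_induce w hc _ hb)

lemma induce_connected_of_reach {S : Set V} (z : V) (hz : z ∈ S)
    (h : ∀ x ∈ S, ∃ w : G.Walk x z, ∀ y ∈ w.support, y ∈ S) :
    (G.induce S).Connected := by
  rw [connected_iff]
  refine ⟨fun ⟨x, hx⟩ ⟨y, hy⟩ => ?_, ⟨⟨z, hz⟩⟩⟩
  obtain ⟨wx, hwx⟩ := h x hx
  obtain ⟨wy, hwy⟩ := h y hy
  exact (reach_induce wx hwx hx hz).trans (reach_induce wy hwy hy hz).symm

section
variable [DecidableEq V]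

lemma disj_take_drop {u v y : V} {p : G.Walk u v} (hp : p.IsPath) (hy : y ∈ p.support) :
    List.Disjoint (p.takeUntil y hy).support (p.dropUntil y hy).support.tail := by
  have h2 := hp.support_nodup
  rw [← take_spec p hy, support_append, List.nodup_append] at h2
  exact fun a ha hb => h2.2.2 a ha a hb rfl

lemma helperA {u v y : V} {p : G.Walk u v} (hp : p.IsPath) (hy : y ∈ p.support)
    (hyu : y ≠ u) : u ∉ (p.dropUntil y hy).support := by
  intro hu
  rw [support_eq_cons] at hu
  rcases List.mem_cons.mp hu with h | h
  · exact hyu h.symm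
  · exact disj_take_drop hp hy (p.takeUntil y hy).start_mem_support h

lemma helperB {u v y : V} {p : G.Walk u v} (hp : p.IsPath) (hy : y ∈ p.support)
    (hyv : y ≠ v) : v ∉ (p.takeUntil y hy).support := by
  intro hv
  have hvd : v ∈ ((p.dropUntil y hy).support).tail := by
    have := (p.dropUntil y hy).end_mem_support
    rw [support_eq_cons] at this
    rcases List.mem_cons.mp this with h | h
    · exact absurd h.symm hyv
    · exact h
  exact disj_take_drop hp hy hv hvd

lemma helperC {u v y x : V} {p : G.Walk u v} (hp : p.IsPath) (hy : y ∈ p.support)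
    (hxy : x ≠ y) : x ∉ (p.takeUntil y hy).support ∨ x ∉ (p.dropUntil y hy).support := by
  by_cases hxt : x ∈ (p.takeUntil y hy).support
  · right
    intro hxd
    rw [support_eq_cons] at hxd
    rcases List.mem_cons.mp hxd with h | h
    · exact hxy h
    · exact disj_take_drop hp hy hxt h
  · exact Or.inl hxt

/-- removing an endpoint `u` keeps the union of two u-v paths connected -/
lemma del_endpoint {u v : V} (p q : G.Walk u v) (hp : p.IsPath) (hq : q.IsPath)
    (huv : u ≠ v) {S : Set V} (hS : ∀ y, y ∈ S ↔ y ∈ p.support ∨ y ∈ q.support) :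
    (G.induce (S \ {u})).Connected := by
  have hvS : v ∈ S \ {u} := ⟨(hS v).mpr (Or.inl p.end_mem_support), by simp [huv.symm]⟩
  apply induce_connected_of_reach v hvS
  rintro x ⟨hxS, hxu⟩
  simp only [Set.mem_singleton_iff] at hxu
  rcases (hS x).mp hxS with hx | hx
  · refine ⟨p.dropUntil x hx, fun y hy => ⟨(hS y).mpr (Or.inl (support_dropUntil_subset p hx hy)), ?_⟩⟩
    simp only [Set.mem_singleton_iff]
    rintro rfl
    exact helperA hp hx hxu hy
  · refine ⟨q.dropUntil x hx, fun y hy => ⟨(hS y).mpr (Or.inr (support_dropUntil_subset q hx hy)), ?_⟩⟩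
    simp only [Set.mem_singleton_iff]
    rintro rfl
    exact helperA hq hx hxu hy

/-- removing an internal vertex of `p` keeps the union connected, provided the two
paths share only their endpoints -/
lemma del_internal {u v : V} (p q : G.Walk u v) (hp : p.IsPath) (hq : q.IsPath)
    (hdisj : ∀ x ∈ p.support, x ∈ q.support → x = u ∨ x = v)
    {x₀ : V} (hx₀p : x₀ ∈ p.support) (hx₀u : x₀ ≠ u) (hx₀v : x₀ ≠ v)
    {S : Set V} (hS : ∀ y, y ∈ S ↔ y ∈ p.support ∨ y ∈ q.support) :
    (G.induce (S \ {x₀})).Connected := by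
  have hx₀q : x₀ ∉ q.support := fun h => by
    rcases hdisj x₀ hx₀p h with h' | h' <;> [exact hx₀u h'; exact hx₀v h']
  have huS : u ∈ S \ {x₀} := ⟨(hS u).mpr (Or.inl p.start_mem_support), by simp [Ne.symm hx₀u]⟩
  apply induce_connected_of_reach u huS
  rintro x ⟨hxS, hxx₀⟩
  simp only [Set.mem_singleton_iff] at hxx₀
  rcases (hS x).mp hxS with hx | hx
  · rcases helperC (x := x₀) hp hx (Ne.symm hxx₀) with ht | hd
    · -- x₀ not in the prefix: go back to u along p
      refine ⟨(p.takeUntil x hx).reverse, fun y hy => ?_⟩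
      rw [support_reverse, List.mem_reverse] at hy
      refine ⟨(hS y).mpr (Or.inl (support_takeUntil_subset p hx hy)), ?_⟩
      simp only [Set.mem_singleton_iff]
      rintro rfl
      exact ht hy
    · -- x₀ not in the suffix: go to v along p, then back to u along q
      refine ⟨(p.dropUntil x hx).append q.reverse, fun y hy => ?_⟩
      rw [mem_support_append_iff] at hy
      rcases hy with hy | hy
      · refine ⟨(hS y).mpr (Or.inl (support_dropUntil_subset p hx hy)), ?_⟩
        simp only [Set.mem_singleton_iff]
        rintro rfl
        exact hd hy
      · rw [support_reverse, List.mem_reverse] at hy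
        refine ⟨(hS y).mpr (Or.inr hy), ?_⟩
        simp only [Set.mem_singleton_iff]
        rintro rfl
        exact hx₀q hy
  · refine ⟨(q.takeUntil x hx).reverse, fun y hy => ?_⟩
    rw [support_reverse, List.mem_reverse] at hy
    refine ⟨(hS y).mpr (Or.inr (support_takeUntil_subset q hx hy)), ?_⟩
    simp only [Set.mem_singleton_iff]
    rintro rfl
    exact hx₀q (support_takeUntil_subset q hx hy)

end

lemma geodesic_unique (hG : IsBlockGraph G) :
    ∀ d : ℕ, ∀ (u v : V) (p q : G.Walk u v), p.IsPath → q.IsPath →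
      p.length = d → q.length = d → G.dist u v = d → p = q := by
  classical
  intro d
  induction d using Nat.strong_induction_on with
  | _ d IH =>
  intro u v p q hp hq hpl hql hd
  obtain _ | (_ | e) := d
  · -- d = 0
    cases p with
    | nil =>
      cases q with
      | nil => rfl
      | cons h q' => simp at hql
    | cons h p' => simp at hpl
  · -- d = 1
    cases p with
    | nil => simp at hpl
    | cons h p' =>
      cases p' with
      | nil =>
        cases q with
        | nil => simp at hql
        | cons h' q' =>
          cases q' with
          | nil => rfl
          | cons h'' q'' => simp at hql
      | cons h2 p'' => simp at hpl
  · -- d = e + 2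
    by_contra hne
    have hconn := hG.1
    have huv : u ≠ v := by
      rintro rfl
      rw [SimpleGraph.dist_self] at hd
      omega
    have hdisj : ∀ x ∈ p.support, x ∈ q.support → x = u ∨ x = v := by
      intro x hxp hxq
      by_contra hcon
      push_neg at hcon
      obtain ⟨hxu, hxv⟩ := hcon
      have e1 : (p.takeUntil x hxp).length + (p.dropUntil x hxp).length = e + 2 := by
        have h := congrArg Walk.length (take_spec p hxp)
        rw [length_append, hpl] at h
        exact h
      have e2 : (q.takeUntil x hxq).length + (q.dropUntil x hxq).length = e + 2 := by
        have h := congrArg Walk.length (take_spec q hxq)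
        rw [length_append, hql] at h
        exact h
      have d1 := SimpleGraph.dist_le (p.takeUntil x hxp)
      have d2 := SimpleGraph.dist_le (p.dropUntil x hxp)
      have d3 := SimpleGraph.dist_le (q.takeUntil x hxq)
      have d4 := SimpleGraph.dist_le (q.dropUntil x hxq)
      have d5 : e + 2 ≤ G.dist u x + G.dist x v := hd ▸ hconn.dist_triangle (v := x)
      have hdux0 : G.dist u x ≠ 0 := fun h0 => hxu (hconn.dist_eq_zero_iff.mp h0).symm
      have hdxv0 : G.dist x v ≠ 0 := fun h0 => hxv (hconn.dist_eq_zero_iff.mp h0)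
      have ex1 : (p.takeUntil x hxp).length = G.dist u x := by omega
      have ex2 : (p.dropUntil x hxp).length = G.dist x v := by omega
      have ex3 : (q.takeUntil x hxq).length = G.dist u x := by omega
      have ex4 : (q.dropUntil x hxq).length = G.dist x v := by omega
      have Et : p.takeUntil x hxp = q.takeUntil x hxq :=
        IH _ (by omega) _ _ _ _ (hp.takeUntil hxp) (hq.takeUntil hxq) ex1 ex3 rfl
      have Ed : p.dropUntil x hxp = q.dropUntil x hxq :=
        IH _ (by omega) _ _ _ _ (hp.dropUntil hxp) (hq.dropUntil hxq) ex2 ex4 rfl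
      exact hne (by rw [← take_spec p hxp, ← take_spec q hxq, Et, Ed])
    set PQ : Set V := {x | x ∈ p.support ∨ x ∈ q.support} with hPQdef
    have hSmem : ∀ y, y ∈ PQ ↔ y ∈ p.support ∨ y ∈ q.support := fun y => Iff.rfl
    have hfin : PQ.Finite := by
      have hsub : PQ ⊆ ↑p.support.toFinset ∪ ↑q.support.toFinset := by
        intro y hy
        rcases (hSmem y).mp hy with h | h <;> simp [h]
      exact (Set.Finite.union (Finset.finite_toSet _) (Finset.finite_toSet _)).subset hsub
    have hcard : 3 ≤ PQ.ncard := by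
      have hsub : (↑p.support.toFinset : Set V) ⊆ PQ := by
        intro y hy
        exact (hSmem y).mpr (Or.inl (by simpa using hy))
      have h1 : (↑p.support.toFinset : Set V).ncard = e + 3 := by
        rw [Set.ncard_coe_finset, List.toFinset_card_of_nodup hp.support_nodup,
          Walk.length_support, hpl]
      have h2 := Set.ncard_le_ncard hsub hfin
      omega
    have hc1 : (G.induce PQ).Connected := by
      apply induce_connected_of_reach u ((hSmem u).mpr (Or.inl p.start_mem_support))
      intro x hx
      rcases (hSmem x).mp hx with hx' | hx'
      · exact ⟨(p.takeUntil x hx').reverse, fun y hy => by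
          rw [support_reverse, List.mem_reverse] at hy
          exact (hSmem y).mpr (Or.inl (support_takeUntil_subset p hx' hy))⟩
      · exact ⟨(q.takeUntil x hx').reverse, fun y hy => by
          rw [support_reverse, List.mem_reverse] at hy
          exact (hSmem y).mpr (Or.inr (support_takeUntil_subset q hx' hy))⟩
    have hc2 : ∀ x₀ ∈ PQ, (G.induce (PQ \ {x₀})).Connected := by
      intro x₀ hx₀
      by_cases hu0 : x₀ = u
      · subst hu0
        exact del_endpoint p q hp hq huv hSmem
      by_cases hv0 : x₀ = v
      · subst hv0
        exact del_endpoint p.reverse q.reverse hp.reverse hq.reverse (Ne.symm huv)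
          (fun y => by rw [hSmem y]; simp [support_reverse])
      · rcases (hSmem x₀).mp hx₀ with h0 | h0
        · exact del_internal p q hp hq hdisj h0 hu0 hv0 hSmem
        · exact del_internal q p hq hp (fun x hx1 hx2 => hdisj x hx2 hx1) h0 hu0 hv0
            (fun y => by rw [hSmem y]; tauto)
    have hclique := hG.2 PQ hcard hc1 hc2
    have hadj : G.Adj u v := hclique ((hSmem u).mpr (Or.inl p.start_mem_support))
      ((hSmem v).mpr (Or.inl p.end_mem_support)) huv
    have : G.dist u v = 1 := SimpleGraph.dist_eq_one_iff_adj.mpr hadj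
    omega


end BlockGraphAux

theorem stmt11 {V : Type*} (G : SimpleGraph V) (hG : IsBlockGraph G)
    (u v : V) (p q : G.Walk u v) (hp : p.IsPath) (hq : q.IsPath)
    (hpl : p.length = G.dist u v) (hql : q.length = G.dist u v) :
    p = q := by
  exact BlockGraphAux.geodesic_unique hG (G.dist u v) u v p q hp hq hpl hql rfl
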